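/- For any integer k ≥ 1, any finite multiset A of non-negative reals, and any non-negative real b, Ψ_k(A ∪ {b}) ≤ (Ψ_k({b})^{1/k} + Ψ_k(A)^{1/k})^k. -/

import Mathlib

/-- `hpoly k A` is the complete homogeneous sum of degree `k` in the elements
of the list `A` (sum of all monomials of total degree `k`). -/
noncomputable def hpoly : ℕ → List ℝ → ℝ
  | 0, _ => 1
  | _+1, [] => 0
  | k+1, a :: A => a * hpoly k (a :: A) + hpoly (k+1) A
termination_by k A => (k, A.length)

/-- `Psi k A = k! ·` (sum of all monomials of total degree `k` in the elements of `A`). -/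
noncomputable def Psi (k : ℕ) (A : List ℝ) : ℝ := (Nat.factorial k : ℝ) * hpoly k A

open MeasureTheory Real Set

namespace PsiAux

lemma hpoly_succ_cons (k : ℕ) (a : ℝ) (A : List ℝ) :
    hpoly (k+1) (a :: A) = a * hpoly k (a :: A) + hpoly (k+1) A := by
  rw [hpoly]

lemma hpoly_cons (k : ℕ) (b : ℝ) (A : List ℝ) :
    hpoly k (b :: A) = ∑ i ∈ Finset.range (k+1), b^i * hpoly (k-i) A := by
  induction k with
  | zero => simp [hpoly]
  | succ k ih =>
    rw [hpoly_succ_cons, ih, Finset.mul_sum,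
      Finset.sum_range_succ' (fun i => b^i * hpoly (k+1-i) A)]
    simp only [pow_zero, one_mul, Nat.sub_zero, Nat.succ_sub_succ]
    congr 1
    exact Finset.sum_congr rfl fun i hi => by ring

lemma Psi_cons (k : ℕ) (b : ℝ) (A : List ℝ) :
    Psi k (b :: A) = ∑ i ∈ Finset.range (k+1),
      (k.choose i : ℝ) * (Nat.factorial i : ℝ) * b^i * Psi (k-i) A := by
  rw [Psi, hpoly_cons, Finset.mul_sum]
  apply Finset.sum_congr rfl
  intro i hi
  rw [Finset.mem_range] at hi
  have hik : i ≤ k := by omega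
  rw [Psi]
  have : (k.factorial : ℝ) = (k.choose i : ℝ) * i.factorial * (k-i).factorial := by
    rw [← Nat.choose_mul_factorial_mul_factorial hik]; push_cast; ring
  rw [this]; ring

lemma Psi_single (k : ℕ) (b : ℝ) : Psi k [b] = (Nat.factorial k : ℝ) * b^k := by
  have h : ∀ k, hpoly k [b] = b^k := by
    intro k; induction k with
    | zero => simp [hpoly]
    | succ k ih => rw [hpoly_succ_cons, ih, hpoly]; ring
  rw [Psi, h]

lemma Psi_zero (A : List ℝ) : Psi 0 A = 1 := by
  rw [Psi, hpoly]; simp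

lemma Psi_nil (j : ℕ) (hj : 1 ≤ j) : Psi j [] = 0 := by
  obtain ⟨i, rfl⟩ : ∃ i, j = i + 1 := ⟨j - 1, by omega⟩
  rw [Psi, hpoly]; simp

/-! ### The exponential measure and its moments -/

noncomputable def expD : ℝ → NNReal := fun x => Real.toNNReal (Real.exp (-x))

lemma expD_meas : Measurable expD := (measurable_exp.comp measurable_neg).real_toNNReal

lemma expD_coe (x : ℝ) : (expD x : ℝ) = Real.exp (-x) :=
  Real.coe_toNNReal _ (Real.exp_pos _).le

noncomputable def expM : Measure ℝ :=
  (volume.restrict (Set.Ioi (0:ℝ))).withDensity (fun x => (expD x : ENNReal))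

lemma expM_integrable (j : ℕ) : Integrable (fun x : ℝ => x^j) expM := by
  rw [expM, integrable_withDensity_iff_integrable_smul expD_meas]
  have h := Real.GammaIntegral_convergent (s := (j:ℝ)+1) (by positivity)
  apply h.congr
  filter_upwards with x
  rw [NNReal.smul_def, expD_coe, smul_eq_mul]
  norm_num [Real.rpow_natCast]

lemma expM_moment (j : ℕ) : ∫ x, x^j ∂expM = (Nat.factorial j : ℝ) := by
  rw [expM, integral_withDensity_eq_integral_smul expD_meas]
  have h := Real.Gamma_eq_integral (s := (j:ℝ)+1) (by positivity)
  rw [Real.Gamma_nat_eq_factorial j] at h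
  simp only [add_sub_cancel_right, Real.rpow_natCast] at h
  rw [h]
  apply setIntegral_congr_fun measurableSet_Ioi
  intro x hx
  show expD x • x ^ j = Real.exp (-x) * x ^ j
  rw [NNReal.smul_def, expD_coe, smul_eq_mul]

instance : IsProbabilityMeasure expM := by
  constructor
  rw [expM, withDensity_apply _ MeasurableSet.univ, Measure.restrict_restrict MeasurableSet.univ,
    Set.univ_inter]
  have hint : IntegrableOn (fun x => Real.exp (-x)) (Set.Ioi (0:ℝ)) volume := by
    simpa using Real.GammaIntegral_convergent (s := 1) one_pos
  have hco : ∀ a : ℝ, ((expD a : ENNReal)) = ENNReal.ofReal (Real.exp (-a)) := fun a => rfl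
  simp only [hco]
  rw [← ofReal_integral_eq_lintegral_ofReal hint
    (Filter.Eventually.of_forall fun x => (Real.exp_pos _).le),
    integral_exp_neg_Ioi_zero, ENNReal.ofReal_one]

lemma expM_ae_nonneg : ∀ᵐ x ∂expM, 0 ≤ x := by
  have h1 : ∀ᵐ x ∂(volume.restrict (Set.Ioi (0:ℝ))), 0 ≤ x := by
    filter_upwards [ae_restrict_mem measurableSet_Ioi] with x hx using le_of_lt hx
  exact (withDensity_absolutelyContinuous _ _).ae_le h1

/-! ### Moment representation of `Psi` -/

lemma rep (A : List ℝ) (hA : ∀ x ∈ A, 0 ≤ x) :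
    ∃ μ : Measure ℝ, IsProbabilityMeasure μ ∧ (∀ᵐ x ∂μ, 0 ≤ x) ∧
      ∀ j : ℕ, Integrable (fun x => x ^ j) μ ∧ ∫ x, x ^ j ∂μ = Psi j A := by
  induction A with
  | nil =>
    refine ⟨Measure.dirac 0, by infer_instance, ?_, ?_⟩
    · rw [ae_dirac_eq]
      exact Filter.eventually_pure.mpr le_rfl
    · intro j
      have hint : Integrable (fun x : ℝ => x ^ j) (Measure.dirac 0) := by
        refine ⟨(measurable_id.pow_const j).aestronglyMeasurable, ?_⟩
        simp only [HasFiniteIntegral, lintegral_dirac]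
        exact ENNReal.coe_lt_top
      refine ⟨hint, ?_⟩
      rw [integral_dirac]
      rcases Nat.eq_zero_or_pos j with rfl | hj
      · simp [Psi_zero]
      · rw [Psi_nil j hj]
        simp [zero_pow (by omega : j ≠ 0)]
  | cons a A ih =>
    obtain ⟨μ, hP, hpos, hm⟩ := ih (fun x hx => hA x (List.mem_cons_of_mem _ hx))
    have ha : 0 ≤ a := hA a List.mem_cons_self
    haveI := hP
    set φ : ℝ × ℝ → ℝ := fun p => a * p.1 + p.2 with hφdef
    have hφ : Measurable φ := (measurable_fst.const_mul a).add measurable_snd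
    refine ⟨(expM.prod μ).map φ, Measure.isProbabilityMeasure_map hφ.aemeasurable, ?_, ?_⟩
    · rw [MeasureTheory.ae_map_iff hφ.aemeasurable measurableSet_Ici]
      have h1 : ∀ᵐ p : ℝ × ℝ ∂(expM.prod μ), 0 ≤ p.1 :=
        Measure.quasiMeasurePreserving_fst.ae expM_ae_nonneg
      have h2 : ∀ᵐ p : ℝ × ℝ ∂(expM.prod μ), 0 ≤ p.2 :=
        Measure.quasiMeasurePreserving_snd.ae hpos
      filter_upwards [h1, h2] with p hp1 hp2
      have : (0:ℝ) ≤ a * p.1 + p.2 := by positivity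
      exact this
    · intro j
      have hterm : ∀ i ∈ Finset.range (j+1),
          Integrable (fun p : ℝ × ℝ =>
            ((a * p.1)^i * (j.choose i : ℝ)) * p.2^(j-i)) (expM.prod μ) := by
        intro i _
        have hf : Integrable (fun t : ℝ => (a*t)^i * (j.choose i:ℝ)) expM := by
          have h := (expM_integrable i).const_mul (a^i * (j.choose i:ℝ))
          exact h.congr (Filter.Eventually.of_forall fun t => by ring)
        exact hf.mul_prod ((hm (j-i)).1)
      have hsum : Integrable (fun p : ℝ × ℝ =>
          ∑ i ∈ Finset.range (j+1), ((a * p.1)^i * (j.choose i : ℝ)) * p.2^(j-i))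
          (expM.prod μ) := integrable_finset_sum _ hterm
      have hexp : ∀ p : ℝ × ℝ, φ p ^ j
          = ∑ i ∈ Finset.range (j+1), ((a * p.1)^i * (j.choose i : ℝ)) * p.2^(j-i) := by
        intro p
        rw [hφdef, add_pow]
        exact Finset.sum_congr rfl fun i _ => by ring
      have hxj : Measurable fun x : ℝ => x ^ j := measurable_id.pow_const j
      have hintm : Integrable (fun x : ℝ => x ^ j) ((expM.prod μ).map φ) := by
        rw [integrable_map_measure hxj.aestronglyMeasurable hφ.aemeasurable]
        exact hsum.congr (Filter.Eventually.of_forall fun p => (hexp p).symm)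
      refine ⟨hintm, ?_⟩
      rw [integral_map hφ.aemeasurable hxj.aestronglyMeasurable]
      calc ∫ p, φ p ^ j ∂(expM.prod μ)
          = ∫ p : ℝ × ℝ, ∑ i ∈ Finset.range (j+1),
              ((a * p.1)^i * (j.choose i : ℝ)) * p.2^(j-i) ∂(expM.prod μ) :=
            integral_congr_ae (Filter.Eventually.of_forall hexp)
        _ = ∑ i ∈ Finset.range (j+1), ∫ p : ℝ × ℝ,
              ((a * p.1)^i * (j.choose i : ℝ)) * p.2^(j-i) ∂(expM.prod μ) :=
            integral_finset_sum _ hterm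
        _ = ∑ i ∈ Finset.range (j+1),
              (j.choose i : ℝ) * (Nat.factorial i : ℝ) * a^i * Psi (j-i) A := by
            apply Finset.sum_congr rfl
            intro i _
            rw [integral_prod_mul (μ := expM) (ν := μ)
              (f := fun t => (a*t)^i * (j.choose i:ℝ)) (g := fun x => x^(j-i))]
            have hval : ∫ t, (a*t)^i * (j.choose i:ℝ) ∂expM
                = a^i * (j.choose i:ℝ) * (Nat.factorial i : ℝ) := by
              rw [show (fun t : ℝ => (a*t)^i * (j.choose i:ℝ))
                  = fun t : ℝ => (a^i * (j.choose i:ℝ)) * t^i from funext fun t => by ring]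
              rw [integral_const_mul, expM_moment]
            rw [hval, (hm (j-i)).2]; ring
        _ = Psi j (a :: A) := (Psi_cons j a A).symm

/-! ### Lyapunov inequality -/

lemma lyap {μ : Measure ℝ} (hP : IsProbabilityMeasure μ) (hpos : ∀ᵐ x ∂μ, 0 ≤ x)
    (hint : ∀ j : ℕ, Integrable (fun x => x ^ j) μ) {j k : ℕ} (hj1 : 1 ≤ j) (hjk : j ≤ k) :
    ∫ x, x ^ j ∂μ ≤ (∫ x, x ^ k ∂μ) ^ ((j:ℝ)/k) := by
  haveI := hP
  have hk1 : 1 ≤ k := le_trans hj1 hjk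
  have hkne : (k:ℝ) ≠ 0 := by positivity
  have hθ0 : 0 ≤ (j:ℝ)/k := by positivity
  have hθ1 : (j:ℝ)/k ≤ 1 := by
    rw [div_le_one (by positivity)]; exact_mod_cast hjk
  set s := ∫ x, x ^ k ∂μ with hs
  have hs0 : 0 ≤ s := integral_nonneg_of_ae (hpos.mono fun x hx => pow_nonneg hx k)
  rcases eq_or_lt_of_le hs0 with h0 | hsp
  · have hzk : (fun x : ℝ => x ^ k) =ᵐ[μ] 0 :=
      (integral_eq_zero_iff_of_nonneg_ae (hpos.mono fun x hx => pow_nonneg hx k)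
        (hint k)).mp h0.symm
    have hz : ∀ᵐ x ∂μ, x = 0 := by
      filter_upwards [hzk] with x hx
      exact pow_eq_zero_iff (by omega) |>.mp hx
    have hzj : ∫ x, x ^ j ∂μ = 0 := by
      rw [integral_congr_ae (g := fun _ : ℝ => (0:ℝ))
        (hz.mono fun x hx => by rw [hx, zero_pow (by omega : j ≠ 0)])]
      simp
    rw [hzj, ← h0, Real.zero_rpow (by positivity)]
  · set θ := (j:ℝ)/k with hθ
    have key : ∀ᵐ x ∂μ, x ^ j / s ^ θ ≤ θ * (x ^ k / s) + (1 - θ) := by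
      filter_upwards [hpos] with x hx
      have hgm := Real.geom_mean_le_arith_mean2_weighted (w₁ := θ) (w₂ := 1-θ)
        (p₁ := x^k/s) (p₂ := 1) hθ0 (by linarith)
        (div_nonneg (pow_nonneg hx k) hs0) zero_le_one (by ring)
      rw [Real.one_rpow, mul_one] at hgm
      have heq : (x ^ k / s) ^ θ = x ^ j / s ^ θ := by
        rw [Real.div_rpow (pow_nonneg hx k) hs0]
        congr 1
        rw [← Real.rpow_natCast x k, ← Real.rpow_mul hx, hθ]
        rw [show (k:ℝ) * ((j:ℝ)/k) = (j:ℝ) by field_simp]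
        exact Real.rpow_natCast x j
      rw [heq] at hgm
      linarith [hgm]
    have hrhs_int : Integrable (fun x : ℝ => θ * (x ^ k / s) + (1 - θ)) μ :=
      (((hint k).div_const s).const_mul θ).add (integrable_const _)
    have hlhs_int : Integrable (fun x : ℝ => x ^ j / s ^ θ) μ := (hint j).div_const _
    have hmono := integral_mono_ae hlhs_int hrhs_int key
    rw [integral_div] at hmono
    have hrhs_val : ∫ x, (θ * (x ^ k / s) + (1 - θ)) ∂μ = 1 := by
      rw [integral_add (((hint k).div_const s).const_mul θ) (integrable_const _)]
      rw [integral_const, probReal_univ]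
      rw [integral_const_mul, integral_div, ← hs, div_self (ne_of_gt hsp)]
      simp
    rw [hrhs_val] at hmono
    calc ∫ x, x ^ j ∂μ = (∫ x, x ^ j ∂μ) / s ^ θ * s ^ θ := by
          field_simp
      _ ≤ 1 * s ^ θ := mul_le_mul_of_nonneg_right hmono (Real.rpow_nonneg hs0 θ)
      _ = s ^ θ := one_mul _

/-! ### Factorial inequality -/

lemma fact_pow_le {i k : ℕ} (h : i ≤ k) : (Nat.factorial i)^k ≤ (Nat.factorial k)^i := by
  have h1 : Nat.factorial i * (i+1)^(k-i) ≤ Nat.factorial k := by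
    have h2 := Nat.factorial_mul_pow_le_factorial (m := i) (n := k - i)
    rwa [Nat.add_sub_cancel' h] at h2
  calc (Nat.factorial i)^k = (Nat.factorial i)^i * (Nat.factorial i)^(k-i) := by
        rw [← pow_add]; congr 1; omega
    _ ≤ (Nat.factorial i)^i * ((i+1)^i)^(k-i) := by
        apply Nat.mul_le_mul_left
        apply Nat.pow_le_pow_left
        exact le_trans (Nat.factorial_le_pow i) (Nat.pow_le_pow_left (by omega) i)
    _ = (Nat.factorial i)^i * ((i+1)^(k-i))^i := by
        rw [← pow_mul, ← pow_mul, Nat.mul_comm (k-i) i]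
    _ = (Nat.factorial i * (i+1)^(k-i))^i := (mul_pow _ _ _).symm
    _ ≤ (Nat.factorial k)^i := Nat.pow_le_pow_left h1 i

lemma fact_rpow {i k : ℕ} (hk : 1 ≤ k) (h : i ≤ k) :
    (Nat.factorial i : ℝ) ≤ (Nat.factorial k : ℝ) ^ ((i:ℝ)/k) := by
  have hkne : (k:ℝ) ≠ 0 := by positivity
  have h2 : ((Nat.factorial i : ℝ))^(k:ℕ) ≤ ((Nat.factorial k : ℝ))^(i:ℕ) := by
    exact_mod_cast fact_pow_le h
  have h3 := Real.rpow_le_rpow (by positivity) h2 (z := 1/(k:ℝ)) (by positivity)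
  rw [← Real.rpow_natCast ((Nat.factorial i : ℝ)) k, ← Real.rpow_natCast ((Nat.factorial k : ℝ)) i,
    ← Real.rpow_mul (by positivity), ← Real.rpow_mul (by positivity)] at h3
  rw [mul_one_div, div_self hkne, Real.rpow_one, mul_one_div] at h3
  exact h3

end PsiAux

open PsiAux in
theorem stmt5 (k : ℕ) (hk : 1 ≤ k) (A : List ℝ) (hA : ∀ x ∈ A, 0 ≤ x)
    (b : ℝ) (hb : 0 ≤ b) :
    Psi k (b :: A) ≤ (Psi k [b] ^ ((1 : ℝ) / k) + Psi k A ^ ((1 : ℝ) / k)) ^ k := by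
  obtain ⟨μ, hP, hpos, hm⟩ := rep A hA
  have hkne : (k:ℝ) ≠ 0 := by positivity
  have hΨnn : ∀ j : ℕ, 0 ≤ Psi j A := by
    intro j
    rw [← (hm j).2]
    exact integral_nonneg_of_ae (hpos.mono fun x hx => pow_nonneg hx j)
  have hΨk : 0 ≤ Psi k A := hΨnn k
  have hlemB : ∀ j, 1 ≤ j → j ≤ k → Psi j A ≤ (Psi k A) ^ ((j:ℝ)/k) := by
    intro j h1 h2
    rw [← (hm j).2, ← (hm k).2]
    exact lyap hP hpos (fun i => (hm i).1) h1 h2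
  have hsingle : Psi k [b] ^ ((1:ℝ)/k) = ((Nat.factorial k : ℝ)) ^ ((1:ℝ)/(k:ℝ)) * b := by
    rw [Psi_single, Real.mul_rpow (by positivity) (by positivity)]
    congr 1
    rw [← Real.rpow_natCast b k, ← Real.rpow_mul hb, mul_one_div, div_self hkne, Real.rpow_one]
  rw [hsingle, add_pow, Psi_cons]
  apply Finset.sum_le_sum
  intro i hi
  rw [Finset.mem_range] at hi
  have hik : i ≤ k := by omega
  have e1 : (((Nat.factorial k : ℝ)) ^ ((1:ℝ)/(k:ℝ)) * b)^i
      = (Nat.factorial k : ℝ) ^ ((i:ℝ)/(k:ℝ)) * b^i := by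
    rw [mul_pow, ← Real.rpow_natCast (((Nat.factorial k : ℝ)) ^ ((1:ℝ)/(k:ℝ))) i,
      ← Real.rpow_mul (by positivity), one_div, inv_mul_eq_div]
  have e2 : (Psi k A ^ ((1:ℝ)/(k:ℝ)))^(k-i) = Psi k A ^ (((k-i:ℕ):ℝ)/(k:ℝ)) := by
    rw [← Real.rpow_natCast (Psi k A ^ ((1:ℝ)/(k:ℝ))) (k-i), ← Real.rpow_mul hΨk,
      one_div, inv_mul_eq_div]
  rw [e1, e2]
  have key : (Nat.factorial i : ℝ) * Psi (k-i) A
      ≤ (Nat.factorial k : ℝ) ^ ((i:ℝ)/(k:ℝ)) * Psi k A ^ (((k-i:ℕ):ℝ)/(k:ℝ)) := by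
    rcases Nat.eq_or_lt_of_le hik with rfl | hlt
    · simp only [Nat.sub_self, Psi_zero, Nat.cast_zero, zero_div, Real.rpow_zero, mul_one]
      rw [div_self hkne, Real.rpow_one]
    · have h1 : 1 ≤ k - i := by omega
      have hB := hlemB (k-i) h1 (by omega)
      have hf := fact_rpow hk hik
      exact mul_le_mul hf hB (hΨnn (k-i)) (by positivity)
  calc (k.choose i : ℝ) * (Nat.factorial i : ℝ) * b^i * Psi (k-i) A
      = ((Nat.factorial i : ℝ) * Psi (k-i) A) * ((k.choose i : ℝ) * b^i) := by ring
    _ ≤ ((Nat.factorial k : ℝ) ^ ((i:ℝ)/(k:ℝ)) * Psi k A ^ (((k-i:ℕ):ℝ)/(k:ℝ)))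
          * ((k.choose i : ℝ) * b^i) :=
        mul_le_mul_of_nonneg_right key (by positivity)
    _ = (Nat.factorial k : ℝ) ^ ((i:ℝ)/(k:ℝ)) * b^i * Psi k A ^ (((k-i:ℕ):ℝ)/(k:ℝ))
          * (k.choose i : ℝ) := by ring
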